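/- The function H attains a strict global minimum on (0,1)² at the point S = (φ/ξ, χ/σ): for every (u,v) ∈ (0,1)² with (u,v) ≠ S one has H(u,v) > H(S). -/

import Mathlib

open Set

noncomputable section

lemma fmin_le (a b : ℝ) (ha : 0 < a) (hab : a < b) {u : ℝ} (hu0 : 0 < u) (hu1 : u < 1) :
    -a * Real.log (a/b) + (a-b) * Real.log (1 - a/b) ≤ -a * Real.log u + (a-b) * Real.log (1-u) := by
  have hb : 0 < b := ha.trans hab
  have hs0 : 0 < a/b := div_pos ha hb
  have hs1 : a/b < 1 := (div_lt_one hb).2 hab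
  have l1 : Real.log (u/(a/b)) ≤ u/(a/b) - 1 :=
    Real.log_le_sub_one_of_pos (div_pos hu0 hs0)
  have l2 : Real.log ((1-u)/(1-a/b)) ≤ (1-u)/(1-a/b) - 1 :=
    Real.log_le_sub_one_of_pos (div_pos (by linarith) (by linarith))
  rw [Real.log_div hu0.ne' hs0.ne'] at l1
  rw [Real.log_div (by linarith : (0:ℝ) < 1-u).ne' (by linarith : (0:ℝ) < 1-a/b).ne'] at l2
  have d1 : u/(a/b) = u*b/a := by field_simp
  have d2 : (1-u)/(1-a/b) = (1-u)*b/(b-a) := by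
    rw [div_eq_div_iff (by linarith) (by linarith)]
    field_simp
  rw [d1] at l1
  rw [d2] at l2
  have e1 : a * (u*b/a - 1) = u*b - a := by field_simp
  have e2 : (b-a) * ((1-u)*b/(b-a) - 1) = (1-u)*b - (b-a) := by
    field_simp [sub_ne_zero.mpr hab.ne']
  nlinarith [mul_le_mul_of_nonneg_left l1 ha.le,
    mul_le_mul_of_nonneg_left l2 (by linarith : (0:ℝ) ≤ b - a)]

lemma fmin_lt (a b : ℝ) (ha : 0 < a) (hab : a < b) {u : ℝ} (hu0 : 0 < u) (hu1 : u < 1)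
    (hne : u ≠ a/b) :
    -a * Real.log (a/b) + (a-b) * Real.log (1 - a/b) < -a * Real.log u + (a-b) * Real.log (1-u) := by
  have hb : 0 < b := ha.trans hab
  have hs0 : 0 < a/b := div_pos ha hb
  have hs1 : a/b < 1 := (div_lt_one hb).2 hab
  have l1 : Real.log (u/(a/b)) < u/(a/b) - 1 :=
    Real.log_lt_sub_one_of_pos (div_pos hu0 hs0)
      (fun h => hne ((div_eq_one_iff_eq hs0.ne').1 h))
  have l2 : Real.log ((1-u)/(1-a/b)) ≤ (1-u)/(1-a/b) - 1 :=
    Real.log_le_sub_one_of_pos (div_pos (by linarith) (by linarith))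
  rw [Real.log_div hu0.ne' hs0.ne'] at l1
  rw [Real.log_div (by linarith : (0:ℝ) < 1-u).ne' (by linarith : (0:ℝ) < 1-a/b).ne'] at l2
  have d1 : u/(a/b) = u*b/a := by field_simp
  have d2 : (1-u)/(1-a/b) = (1-u)*b/(b-a) := by
    rw [div_eq_div_iff (by linarith) (by linarith)]
    field_simp
  rw [d1] at l1
  rw [d2] at l2
  have e1 : a * (u*b/a - 1) = u*b - a := by field_simp
  have e2 : (b-a) * ((1-u)*b/(b-a) - 1) = (1-u)*b - (b-a) := by
    field_simp [sub_ne_zero.mpr hab.ne']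
  nlinarith [mul_lt_mul_of_pos_left l1 ha,
    mul_le_mul_of_nonneg_left l2 (by linarith : (0:ℝ) ≤ b - a)]

/-- The first integral `H(u,v) = -φ log u + (φ-ξ) log(1-u) - χ log v + (χ-σ) log(1-v)`. -/
def Hfun (σ χ ξ φ : ℝ) (u v : ℝ) : ℝ :=
  -φ * Real.log u + (φ - ξ) * Real.log (1 - u)
  - χ * Real.log v + (χ - σ) * Real.log (1 - v)

/-- `H` attains a strict global minimum on `(0,1)²` at `S = (φ/ξ, χ/σ)`. -/
theorem statement6 (σ χ ξ φ : ℝ) (hχ : 0 < χ) (hχσ : χ < σ) (hφ : 0 < φ) (hφξ : φ < ξ) :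
    ∀ u v : ℝ, u ∈ Ioo (0:ℝ) 1 → v ∈ Ioo (0:ℝ) 1 → (u, v) ≠ (φ / ξ, χ / σ) →
      Hfun σ χ ξ φ (φ / ξ) (χ / σ) < Hfun σ χ ξ φ u v := by
  intro u v hu hv hne
  simp only [Hfun]
  rcases eq_or_ne u (φ/ξ) with hu' | hu'
  · have hv' : v ≠ χ/σ := by
      intro h; exact hne (by rw [hu', h])
    have h1 := fmin_lt χ σ hχ hχσ hv.1 hv.2 hv'
    subst hu'
    linarith
  · have h1 := fmin_lt φ ξ hφ hφξ hu.1 hu.2 hu'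
    have h2 := fmin_le χ σ hχ hχσ hv.1 hv.2
    linarith
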